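/- Let 𝒳 be a fundamental minimal system for 𝕏 and K ≥ 1. Suppose that for each f in the linear span ⟨𝒳⟩ there exists f* in the linear span ⟨𝒳*⟩ of the dual system with f*(f) = ‖f‖ and ‖f*‖ ≤ K. Then for each f ∈ ⟨𝒳⟩ there is m(f) ∈ ℕ such that ‖f‖ ≤ K‖f + g‖ for every g in the linear span of 𝒳_{>m(f)}. -/

import Mathlib

/-- If for each `f` in the span of `𝒳` there is `f* ∈ ⟨𝒳*⟩` with `f*(f) = ‖f‖`
and `‖f*‖ ≤ K`, then for each such `f` there is `m(f)` such that `‖f‖ ≤ K‖f + g‖` for every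
`g` in the span of `𝒳_{>m(f)}`. -/
theorem norming_functional_implies_tail_estimate
    {𝕜 : Type*} [RCLike 𝕜] {X : Type*} [NormedAddCommGroup X] [NormedSpace 𝕜 X]
    [CompleteSpace X] [TopologicalSpace.SeparableSpace X]
    (hinf : ¬ FiniteDimensional 𝕜 X)
    (x : ℕ → X) (xs : ℕ → X →L[𝕜] 𝕜)
    (hdense : Dense (Submodule.span 𝕜 (Set.range x) : Set X))
    (hbi : ∀ n k, xs n (x k) = if n = k then 1 else 0)
    (K : ℝ) (hK : 1 ≤ K)
    (h : ∀ f ∈ Submodule.span 𝕜 (Set.range x),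
      ∃ fs ∈ Submodule.span 𝕜 (Set.range xs), fs f = (‖f‖ : 𝕜) ∧ ‖fs‖ ≤ K) :
    ∀ f ∈ Submodule.span 𝕜 (Set.range x), ∃ m : ℕ,
      ∀ g ∈ Submodule.span 𝕜 (x '' {n | m < n}), ‖f‖ ≤ K * ‖f + g‖ := by
  intro f hf
  obtain ⟨fs, hfs, hff, hfn⟩ := h f hf
  rw [Submodule.mem_span_set'] at hfs
  obtain ⟨n, c, v, rfl⟩ := hfs
  -- choose indices
  choose k hk using fun i => (v i).2
  -- m = max of the k i
  set m : ℕ := (Finset.univ.sup k) with hm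
  refine ⟨m, fun g hg => ?_⟩
  have hker : ∀ j, m < j → (∑ i, c i • (v i : X →L[𝕜] 𝕜)) (x j) = 0 := by
    intro j hj
    simp only [ContinuousLinearMap.coe_sum', Finset.sum_apply,
      ContinuousLinearMap.coe_smul', Pi.smul_apply]
    apply Finset.sum_eq_zero
    intro i _
    rw [← hk i, hbi]
    have : k i ≤ m := Finset.le_sup (Finset.mem_univ i)
    rw [if_neg (by omega)]
    simp
  have hg0 : (∑ i, c i • (v i : X →L[𝕜] 𝕜)) g = 0 := by
    have : Submodule.span 𝕜 (x '' {n | m < n}) ≤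
        LinearMap.ker ((∑ i, c i • (v i : X →L[𝕜] 𝕜) : X →L[𝕜] 𝕜) : X →ₗ[𝕜] 𝕜) := by
      rw [Submodule.span_le]
      rintro _ ⟨j, hj, rfl⟩
      exact hker j hj
    exact this hg
  set F : X →L[𝕜] 𝕜 := ∑ i, c i • (v i : X →L[𝕜] 𝕜)
  have : (‖f‖ : 𝕜) = F (f + g) := by
    rw [map_add, hg0, add_zero, hff]
  have h1 : ‖f‖ = ‖F (f + g)‖ := by
    rw [← this]
    simp
  calc ‖f‖ = ‖F (f + g)‖ := h1
    _ ≤ ‖F‖ * ‖f + g‖ := F.le_opNorm _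
    _ ≤ K * ‖f + g‖ := by
        apply mul_le_mul_of_nonneg_right hfn (norm_nonneg _)
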